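/- arXiv:1209.4956 — 3 statements merged into one kernel-verified Lean document; each statement's English description precedes it below -/
import Mathlib

section
/- Relation (A): Let u be a 0-grassmannian affine permutation and let a < b, c < d be integers with b − a ≤ k, d − c ≤ k, such that the residues of a, b, c, d modulo n are pairwise distinct. Then the composite u·t_{a,b}·t_{c,d} is defined if and only if the composite u·t_{c,d}·t_{a,b} is defined, and in that case the two resulting affine permutations are equal. -/
open Function

/-- The affine transposition `t_{a,b}` of period `n`: it exchanges `a + m*n` and
`b + m*n` for every `m : ℤ` and fixes all other integers. -/
def affT (n a b : ℤ) : ℤ → ℤ := fun i =>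
  if (i - a) % n = 0 then i - a + b
  else if (i - b) % n = 0 then i - b + a
  else i

/-- `u` is an affine permutation of period `n`: a bijection of `ℤ` with
`u (i + n) = u i + n` and `∑_{i=1}^{n} u i = n (n+1) / 2`. -/
def IsAffinePerm (n : ℤ) (u : ℤ → ℤ) : Prop :=
  Function.Bijective u ∧ (∀ i : ℤ, u (i + n) = u i + n) ∧
    ∑ i ∈ Finset.Icc (1 : ℤ) n, u i = n * (n + 1) / 2

/-- The operator `t_{a,b}` is defined at `u`:
`u a ≤ 0 < u b` and for every `a < i < b`, either `u i < u a` or `u i > u b`. -/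
def DefinedAt (u : ℤ → ℤ) (a b : ℤ) : Prop :=
  u a ≤ 0 ∧ 0 < u b ∧ ∀ i : ℤ, a < i → i < b → u i < u a ∨ u b < u i

/-- `u` is 0-grassmannian: the positions of the values `1, 2, …, n` under `u`
appear in increasing order, i.e. `u⁻¹ 1 < u⁻¹ 2 < ⋯ < u⁻¹ n`. -/
def IsGrassmannian (n : ℤ) (u : ℤ → ℤ) : Prop :=
  ∀ i j p q : ℤ, 1 ≤ i → i < j → j ≤ n → u p = i → u q = j → p < q

/-- The composite `u · t_{a,b} · t_{c,d}` is defined. -/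
def Def2 (n : ℤ) (u : ℤ → ℤ) (a b c d : ℤ) : Prop :=
  DefinedAt u a b ∧ DefinedAt (u ∘ affT n a b) c d

/-- The composite `u · t_{a₁,b₁} · t_{a₂,b₂} · t_{a₃,b₃}` is defined. -/
def Def3 (n : ℤ) (u : ℤ → ℤ) (a₁ b₁ a₂ b₂ a₃ b₃ : ℤ) : Prop :=
  DefinedAt u a₁ b₁ ∧ DefinedAt (u ∘ affT n a₁ b₁) a₂ b₂ ∧
    DefinedAt ((u ∘ affT n a₁ b₁) ∘ affT n a₂ b₂) a₃ b₃

/- ### Auxiliary lemmas -/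

lemma affT_apply_a {n a b i : ℤ} (h : n ∣ i - a) : affT n a b i = i - a + b := by
  unfold affT
  rw [if_pos (Int.emod_eq_zero_of_dvd h)]

lemma affT_apply_b {n a b i : ℤ} (hab : ¬ n ∣ b - a) (h : n ∣ i - b) :
    affT n a b i = i - b + a := by
  unfold affT
  rw [if_neg, if_pos (Int.emod_eq_zero_of_dvd h)]
  intro hc
  apply hab
  have h2 := dvd_sub (Int.dvd_of_emod_eq_zero hc) h
  have e : (i - a) - (i - b) = b - a := by ring
  rwa [e] at h2

lemma affT_fix {n a b i : ℤ} (ha : ¬ n ∣ i - a) (hb : ¬ n ∣ i - b) : affT n a b i = i := by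
  unfold affT
  rw [if_neg (fun hc => ha (Int.dvd_of_emod_eq_zero hc)),
    if_neg (fun hc => hb (Int.dvd_of_emod_eq_zero hc))]

lemma pt1 {n a b c d i : ℤ}
    (nac : ¬ n ∣ c - a) (nad : ¬ n ∣ d - a) (nbc : ¬ n ∣ c - b) (nbd : ¬ n ∣ d - b)
    (hia : n ∣ i - a) :
    affT n a b (affT n c d i) = affT n c d (affT n a b i) := by
  have hic : ¬ n ∣ i - c := fun h => nac (by
    have h2 := dvd_sub hia h
    have e : (i - a) - (i - c) = c - a := by ring
    rwa [e] at h2)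
  have hid : ¬ n ∣ i - d := fun h => nad (by
    have h2 := dvd_sub hia h
    have e : (i - a) - (i - d) = d - a := by ring
    rwa [e] at h2)
  have h3 : ¬ n ∣ (i - a + b) - c := fun h => nbc (by
    have h2 := dvd_sub h hia
    have e : ((i - a + b) - c) - (i - a) = b - c := by ring
    rwa [e, dvd_sub_comm] at h2)
  have h4 : ¬ n ∣ (i - a + b) - d := fun h => nbd (by
    have h2 := dvd_sub h hia
    have e : ((i - a + b) - d) - (i - a) = b - d := by ring
    rwa [e, dvd_sub_comm] at h2)
  rw [affT_fix hic hid, affT_apply_a hia, affT_fix h3 h4]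

lemma pt2 {n a b c d i : ℤ} (nab : ¬ n ∣ b - a)
    (nac : ¬ n ∣ c - a) (nad : ¬ n ∣ d - a) (nbc : ¬ n ∣ c - b) (nbd : ¬ n ∣ d - b)
    (hib : n ∣ i - b) :
    affT n a b (affT n c d i) = affT n c d (affT n a b i) := by
  have hic : ¬ n ∣ i - c := fun h => nbc (by
    have h2 := dvd_sub hib h
    have e : (i - b) - (i - c) = c - b := by ring
    rwa [e] at h2)
  have hid : ¬ n ∣ i - d := fun h => nbd (by
    have h2 := dvd_sub hib h
    have e : (i - b) - (i - d) = d - b := by ring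
    rwa [e] at h2)
  have h3 : ¬ n ∣ (i - b + a) - c := fun h => nac (by
    have h2 := dvd_sub h hib
    have e : ((i - b + a) - c) - (i - b) = a - c := by ring
    rwa [e, dvd_sub_comm] at h2)
  have h4 : ¬ n ∣ (i - b + a) - d := fun h => nad (by
    have h2 := dvd_sub h hib
    have e : ((i - b + a) - d) - (i - b) = a - d := by ring
    rwa [e, dvd_sub_comm] at h2)
  rw [affT_fix hic hid, affT_apply_b nab hib, affT_fix h3 h4]

lemma affT_comm_apply {n a b c d : ℤ} (nab : ¬ n ∣ b - a) (ncd : ¬ n ∣ d - c)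
    (nac : ¬ n ∣ c - a) (nad : ¬ n ∣ d - a) (nbc : ¬ n ∣ c - b) (nbd : ¬ n ∣ d - b)
    (i : ℤ) :
    affT n a b (affT n c d i) = affT n c d (affT n a b i) := by
  have nca : ¬ n ∣ a - c := fun h => nac (dvd_sub_comm.mp h)
  have nda : ¬ n ∣ a - d := fun h => nad (dvd_sub_comm.mp h)
  have ncb : ¬ n ∣ b - c := fun h => nbc (dvd_sub_comm.mp h)
  have ndb : ¬ n ∣ b - d := fun h => nbd (dvd_sub_comm.mp h)
  by_cases ha : n ∣ i - a
  · exact pt1 nac nad nbc nbd ha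
  by_cases hb : n ∣ i - b
  · exact pt2 nab nac nad nbc nbd hb
  by_cases hc : n ∣ i - c
  · exact (pt1 nca ncb nda ndb hc).symm
  by_cases hd : n ∣ i - d
  · exact (pt2 ncd nca ncb nda ndb hd).symm
  · rw [affT_fix hc hd, affT_fix ha hb, affT_fix hc hd]

/-- The key one-directional lemma. -/
lemma fwd (n : ℤ) (u : ℤ → ℤ)
    (hper : ∀ i m : ℤ, u (i + m * n) = u i + m * n)
    (a b c d : ℤ) (hab : a < b) (hcd : c < d)
    (nab : ¬ n ∣ b - a) (ncd : ¬ n ∣ d - c)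
    (nac : ¬ n ∣ c - a) (nad : ¬ n ∣ d - a)
    (nbc : ¬ n ∣ c - b) (nbd : ¬ n ∣ d - b)
    (H : Def2 n u a b c d) : Def2 n u c d a b := by
  obtain ⟨⟨ua0, ub0, W1⟩, H2⟩ := H
  have tc : affT n a b c = c := affT_fix nac nbc
  have td : affT n a b d = d := affT_fix nad nbd
  obtain ⟨uc0', ud0', W2⟩ := H2
  have uc0 : u c ≤ 0 := by simpa [tc] using uc0'
  have ud0 : 0 < u d := by simpa [td] using ud0'
  have W2' : ∀ i : ℤ, c < i → i < d →
      u (affT n a b i) < u c ∨ u d < u (affT n a b i) := by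
    intro i hi1 hi2
    have := W2 i hi1 hi2
    simpa [tc, td] using this
  have uab : u a < u b := lt_of_le_of_lt ua0 ub0
  have ucd : u c < u d := lt_of_le_of_lt uc0 ud0
  -- Part 1 : window condition for u on (c, d)
  have W2'' : ∀ i : ℤ, c < i → i < d → u i < u c ∨ u d < u i := by
    intro i hci hid
    by_cases hia : n ∣ i - a
    · obtain ⟨m, hm⟩ := hia
      have hi : i = a + m * n := by rw [mul_comm]; linarith
      have hui : u i = u a + m * n := by rw [hi, hper]
      have ht : affT n a b i = b + m * n := by
        rw [affT_apply_a ⟨m, hm⟩, hm]; ring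
      have hut : u (affT n a b i) = u b + m * n := by rw [ht, hper]
      rcases W2' i hci hid with h | h
      · left; rw [hui]; rw [hut] at h; linarith
      · rw [hut] at h
        by_contra hcon
        push_neg at hcon
        obtain ⟨hc1, hc2⟩ := hcon
        rcases lt_trichotomy (b + m * n) d with hq | hq | hq
        · have h5 := W2' (b + m * n) (by linarith [hi]) hq
          have ht2 : affT n a b (b + m * n) = a + m * n := by
            rw [affT_apply_b nab ⟨m, by ring⟩]; ring
          rw [ht2, hper] at h5
          rcases h5 with h5 | h5 <;> linarith [hui]
        · exact nbd ⟨m, by rw [mul_comm]; linarith⟩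
        · have hj := W1 (d - m * n) (by linarith [hi]) (by linarith)
          have hud : u (d - m * n) = u d - m * n := by
            have h7 := hper (d - m * n) m
            have e : d - m * n + m * n = d := by ring
            rw [e] at h7; linarith
          rw [hud] at hj
          rcases hj with h6 | h6 <;> linarith [hui]
    · by_cases hib : n ∣ i - b
      · obtain ⟨m, hm⟩ := hib
        have hi : i = b + m * n := by rw [mul_comm]; linarith
        have hui : u i = u b + m * n := by rw [hi, hper]
        have ht : affT n a b i = a + m * n := by
          rw [affT_apply_b nab ⟨m, hm⟩, hm]; ring
        have hut : u (affT n a b i) = u a + m * n := by rw [ht, hper]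
        rcases W2' i hci hid with h | h
        · rw [hut] at h
          by_contra hcon
          push_neg at hcon
          obtain ⟨hc1, hc2⟩ := hcon
          rcases lt_trichotomy c (a + m * n) with hp | hp | hp
          · have h5 := W2' (a + m * n) hp (by linarith [hi])
            have ht2 : affT n a b (a + m * n) = b + m * n := by
              rw [affT_apply_a ⟨m, by ring⟩]; ring
            rw [ht2, hper] at h5
            rcases h5 with h5 | h5 <;> linarith [hui]
          · exact nac ⟨m, by rw [mul_comm]; linarith⟩
          · have hj := W1 (c - m * n) (by linarith) (by linarith [hi])
            have huc : u (c - m * n) = u c - m * n := by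
              have h7 := hper (c - m * n) m
              have e : c - m * n + m * n = c := by ring
              rw [e] at h7; linarith
            rw [huc] at hj
            rcases hj with h6 | h6 <;> linarith [hui]
        · right; rw [hui]; rw [hut] at h; linarith
      · have h := W2' i hci hid
        rwa [affT_fix hia hib] at h
  -- Part 2 : the second operator
  have nca : ¬ n ∣ a - c := fun h => nac (dvd_sub_comm.mp h)
  have nda : ¬ n ∣ a - d := fun h => nad (dvd_sub_comm.mp h)
  have ncb : ¬ n ∣ b - c := fun h => nbc (dvd_sub_comm.mp h)
  have ndb : ¬ n ∣ b - d := fun h => nbd (dvd_sub_comm.mp h)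
  have ta : affT n c d a = a := affT_fix nca nda
  have tb : affT n c d b = b := affT_fix ncb ndb
  refine ⟨⟨uc0, ud0, W2''⟩, ?_, ?_, ?_⟩
  · simpa [ta] using ua0
  · simpa [tb] using ub0
  · intro i hai hib2
    simp only [comp_apply, ta, tb]
    by_cases hic : n ∣ i - c
    · obtain ⟨m, hm⟩ := hic
      have hi : i = c + m * n := by rw [mul_comm]; linarith
      have hui : u i = u c + m * n := by rw [hi, hper]
      have ht : affT n c d i = d + m * n := by
        rw [affT_apply_a ⟨m, hm⟩, hm]; ring
      rw [ht, hper]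
      have h0 := W1 i hai hib2
      rw [hui] at h0
      rcases h0 with h | h
      · by_contra hcon
        push_neg at hcon
        obtain ⟨hc1, hc2⟩ := hcon
        rcases lt_trichotomy (d + m * n) b with hq | hq | hq
        · have h5 := W1 (d + m * n) (by linarith [hi]) hq
          rw [hper] at h5
          rcases h5 with h5 | h5 <;> linarith
        · exact nbd ⟨-m, by rw [mul_comm]; linarith⟩
        · have h6 := W2' (b - m * n) (by linarith [hi]) (by linarith)
          have ht2 : affT n a b (b - m * n) = a - m * n := by
            rw [affT_apply_b nab ⟨-m, by ring⟩]; ring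
          have hua : u (a - m * n) = u a - m * n := by
            have h7 := hper (a - m * n) m
            have e : a - m * n + m * n = a := by ring
            rw [e] at h7; linarith
          rw [ht2, hua] at h6
          rcases h6 with h6 | h6 <;> linarith
      · right; linarith
    · by_cases hid2 : n ∣ i - d
      · obtain ⟨m, hm⟩ := hid2
        have hi : i = d + m * n := by rw [mul_comm]; linarith
        have hui : u i = u d + m * n := by rw [hi, hper]
        have ht : affT n c d i = c + m * n := by
          rw [affT_apply_b ncd ⟨m, hm⟩, hm]; ring
        rw [ht, hper]
        have h0 := W1 i hai hib2
        rw [hui] at h0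
        rcases h0 with h | h
        · left; linarith
        · by_contra hcon
          push_neg at hcon
          obtain ⟨hc1, hc2⟩ := hcon
          rcases lt_trichotomy a (c + m * n) with hp | hp | hp
          · have h5 := W1 (c + m * n) hp (by linarith [hi])
            rw [hper] at h5
            rcases h5 with h5 | h5 <;> linarith
          · exact nac ⟨-m, by rw [mul_comm]; linarith⟩
          · have h6 := W2' (a - m * n) (by linarith) (by linarith [hi])
            have ht2 : affT n a b (a - m * n) = b - m * n := by
              rw [affT_apply_a ⟨-m, by ring⟩]; ring
            have hub : u (b - m * n) = u b - m * n := by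
              have h7 := hper (b - m * n) m
              have e : b - m * n + m * n = b := by ring
              rw [e] at h7; linarith
            rw [ht2, hub] at h6
            rcases h6 with h6 | h6 <;> linarith
      · have h := W1 i hai hib2
        rw [affT_fix hic hid2]
        exact h

theorem stmt3 (k : ℤ) (hk : 1 ≤ k) (u : ℤ → ℤ)
    (hu : IsAffinePerm (k + 1) u) (hg : IsGrassmannian (k + 1) u)
    (a b c d : ℤ) (hab : a < b) (hba : b - a ≤ k) (hcd : c < d) (hdc : d - c ≤ k)
    (h1 : a % (k + 1) ≠ b % (k + 1)) (h2 : a % (k + 1) ≠ c % (k + 1))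
    (h3 : a % (k + 1) ≠ d % (k + 1)) (h4 : b % (k + 1) ≠ c % (k + 1))
    (h5 : b % (k + 1) ≠ d % (k + 1)) (h6 : c % (k + 1) ≠ d % (k + 1)) :
    (Def2 (k + 1) u a b c d ↔ Def2 (k + 1) u c d a b) ∧
      (Def2 (k + 1) u a b c d →
        (u ∘ affT (k + 1) a b) ∘ affT (k + 1) c d =
          (u ∘ affT (k + 1) c d) ∘ affT (k + 1) a b) := by
  set n : ℤ := k + 1 with hn
  have hp1 : ∀ i : ℤ, u (i + n) = u i + n := hu.2.1
  have hper : ∀ i m : ℤ, u (i + m * n) = u i + m * n := by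
    intro i m
    induction m using Int.induction_on with
    | zero => simp
    | succ q ih =>
      have e : i + (↑q + 1) * n = (i + ↑q * n) + n := by ring
      rw [e, hp1, ih]; ring
    | pred q ih =>
      have e : i + (-↑q) * n = (i + (-↑q - 1) * n) + n := by ring
      have h7 := hp1 (i + (-↑q - 1) * n)
      rw [← e, ih] at h7
      linarith
  have nab : ¬ n ∣ b - a := fun h => h1 (Int.modEq_iff_dvd.mpr h)
  have nac : ¬ n ∣ c - a := fun h => h2 (Int.modEq_iff_dvd.mpr h)
  have nad : ¬ n ∣ d - a := fun h => h3 (Int.modEq_iff_dvd.mpr h)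
  have nbc : ¬ n ∣ c - b := fun h => h4 (Int.modEq_iff_dvd.mpr h)
  have nbd : ¬ n ∣ d - b := fun h => h5 (Int.modEq_iff_dvd.mpr h)
  have ncd : ¬ n ∣ d - c := fun h => h6 (Int.modEq_iff_dvd.mpr h)
  have nca : ¬ n ∣ a - c := fun h => nac (dvd_sub_comm.mp h)
  have nda : ¬ n ∣ a - d := fun h => nad (dvd_sub_comm.mp h)
  have ncb : ¬ n ∣ b - c := fun h => nbc (dvd_sub_comm.mp h)
  have ndb : ¬ n ∣ b - d := fun h => nbd (dvd_sub_comm.mp h)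
  constructor
  · constructor
    · exact fwd n u hper a b c d hab hcd nab ncd nac nad nbc nbd
    · exact fwd n u hper c d a b hcd hab ncd nab nca ncb nda ndb
  · intro _
    funext i
    simp only [comp_apply]
    exact congrArg u (affT_comm_apply nab ncd nac nad nbc nbd i)
end

section
/- Relation (X1): Let u be a 0-grassmannian affine permutation, let a < b < c < d be integers with b − a ≤ k and d − c ≤ k, and set q = (b − a) + (d − c). Suppose q < n, a ≡ d (mod n), u(c) ≤ 0, and u(d) ≤ 0. If the composite u·t_{a,b}·t_{c,d} is defined, then the composite u·t_{d,c+q}·t_{b−q,a} is defined and the two resulting affine permutations are equal. -/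
open Function

lemma affT_add_mul (n a b i m : ℤ) :
    affT n a b (i + m * n) = affT n a b i + m * n := by
  unfold affT
  have h1 : i + m * n - a = i - a + m * n := by ring
  have h2 : i + m * n - b = i - b + m * n := by ring
  rw [h1, h2]
  simp only [Int.add_mul_emod_self_right]
  split_ifs <;> ring

lemma affT_shift (n a b m : ℤ) :
    affT n (a + m * n) (b + m * n) = affT n a b := by
  funext i
  unfold affT
  have h1 : i - (a + m * n) = i - a + (-m) * n := by ring
  have h2 : i - (b + m * n) = i - b + (-m) * n := by ring
  rw [h1, h2]
  simp only [Int.add_mul_emod_self_right]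
  split_ifs <;> ring

lemma period_mul (n : ℤ) (w : ℤ → ℤ) (hw : ∀ i, w (i + n) = w i + n)
    (i m : ℤ) : w (i + m * n) = w i + m * n := by
  induction m using Int.induction_on with
  | zero => simp
  | succ t ih =>
      have e : i + (t + 1 : ℤ) * n = (i + t * n) + n := by ring
      rw [e, hw, ih]; ring
  | pred t ih =>
      have h := hw (i + (-t - 1 : ℤ) * n)
      have e : i + (-t - 1 : ℤ) * n + n = i + (-t : ℤ) * n := by ring
      rw [e] at h
      have e2 : i + (-(t:ℤ) - 1) * n = i + (-(t:ℤ)) * n - n := by ring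
      rw [show (-(t:ℤ) - 1) * n = -(t:ℤ) * n - n from by ring] at h ⊢
      linarith [ih, h]

lemma affT_self (n a b : ℤ) : affT n a b a = b := by
  simp [affT]

theorem stmt12 (k : ℤ) (hk : 1 ≤ k) (u : ℤ → ℤ)
    (hu : IsAffinePerm (k + 1) u) (hg : IsGrassmannian (k + 1) u)
    (a b c d : ℤ) (hab : a < b) (hbc : b < c) (hcd : c < d)
    (hba : b - a ≤ k) (hdc : d - c ≤ k)
    (hq : (b - a) + (d - c) < k + 1)
    (hmod : a % (k + 1) = d % (k + 1))
    (huc : u c ≤ 0) (hud : u d ≤ 0)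
    (hdef : Def2 (k + 1) u a b c d) :
    Def2 (k + 1) u d (c + ((b - a) + (d - c))) (b - ((b - a) + (d - c))) a ∧
      (u ∘ affT (k + 1) a b) ∘ affT (k + 1) c d =
        (u ∘ affT (k + 1) d (c + ((b - a) + (d - c)))) ∘
          affT (k + 1) (b - ((b - a) + (d - c))) a := by
  obtain ⟨-, hper, -⟩ := hu
  obtain ⟨⟨hua, hub, hmid1⟩, ⟨hvc, hvd, hmid2⟩⟩ := hdef
  have hdvd : (k + 1) ∣ d - a := Int.ModEq.dvd hmod
  obtain ⟨m, hm⟩ := hdvd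
  have hn0 : (0 : ℤ) < k + 1 := by linarith
  have hm0 : 0 < m := by nlinarith
  have hmn : 0 < m * (k + 1) := by positivity
  have hd_eq : d = a + m * (k + 1) := by linarith [mul_comm m (k + 1)]
  have hcq : c + ((b - a) + (d - c)) = b + m * (k + 1) := by linarith
  have E1 : affT (k + 1) d (c + ((b - a) + (d - c))) = affT (k + 1) a b := by
    rw [hcq, hd_eq]; exact affT_shift (k + 1) a b m
  have E2 : affT (k + 1) (b - ((b - a) + (d - c))) a = affT (k + 1) c d := by
    have h := affT_shift (k + 1) c d (-m)
    have e1 : c + (-m) * (k + 1) = b - ((b - a) + (d - c)) := by linarith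
    have e2 : d + (-m) * (k + 1) = a := by linarith
    rw [e1, e2] at h; exact h
  have vper : ∀ i t : ℤ, (u ∘ affT (k + 1) a b) (i + t * (k + 1)) =
      (u ∘ affT (k + 1) a b) i + t * (k + 1) := by
    intro i t
    simp only [comp_apply, affT_add_mul]
    exact period_mul (k + 1) u hper _ t
  refine ⟨⟨⟨hud, ?_, ?_⟩, ?_⟩, ?_⟩
  · rw [hcq, period_mul (k + 1) u hper b m]
    linarith
  · intro i h1 h2
    have hj := hmid1 (i - m * (k + 1)) (by linarith) (by linarith)
    have hui : u i = u (i - m * (k + 1)) + m * (k + 1) := by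
      have h := period_mul (k + 1) u hper (i - m * (k + 1)) m
      simpa using h
    have hud' : u d = u a + m * (k + 1) := by
      have h := period_mul (k + 1) u hper a m
      rw [← hd_eq] at h; exact h
    have hucq : u (c + ((b - a) + (d - c))) = u b + m * (k + 1) := by
      rw [hcq]; exact period_mul (k + 1) u hper b m
    rcases hj with h | h
    · left; linarith
    · right; linarith
  · rw [E1]
    have hvbq : (u ∘ affT (k + 1) a b) (b - ((b - a) + (d - c))) =
        (u ∘ affT (k + 1) a b) c - m * (k + 1) := by
      have h := vper c (-m)
      rw [show c + (-m) * (k + 1) = b - ((b - a) + (d - c)) from by linarith] at h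
      rw [h]; ring
    have hva : (u ∘ affT (k + 1) a b) a =
        (u ∘ affT (k + 1) a b) d - m * (k + 1) := by
      have h := vper d (-m)
      rw [show d + (-m) * (k + 1) = a from by linarith] at h
      rw [h]; ring
    refine ⟨by rw [hvbq]; linarith, by simp only [comp_apply, affT_self]; exact hub, ?_⟩
    intro i h1 h2
    have hj := hmid2 (i + m * (k + 1)) (by linarith) (by linarith)
    have hvi := vper i m
    rcases hj with h | h
    · left; rw [hvbq]; linarith
    · right; rw [hva]; linarith
  · rw [E1, E2]
end

section
/- Relation (X5): Let u be a 0-grassmannian affine permutation and let a < b < c < d be integers with b − a ≤ k and d − c ≤ k. Suppose b ≡ d (mod n), b − a > d − c, and u(d − b + a) > 0. If the composite u·t_{a,b}·t_{c,d} is defined, then the composite u·t_{c,d}·t_{a, b+c−d} is defined and the two resulting affine permutations are equal. -/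
open Function

/-! Auxiliary lemmas -/

lemma affT_left (n a b x : ℤ) (h : n ∣ x - a) : affT n a b x = x - a + b := by
  simp [affT, Int.dvd_iff_emod_eq_zero.mp h]

lemma affT_right (n a b x : ℤ) (h1 : ¬ n ∣ x - a) (h2 : n ∣ x - b) :
    affT n a b x = x - b + a := by
  show (if (x - a) % n = 0 then x - a + b else if (x - b) % n = 0 then x - b + a else x)
      = x - b + a
  rw [if_neg (fun h => h1 (Int.dvd_iff_emod_eq_zero.mpr h)),
    if_pos (Int.dvd_iff_emod_eq_zero.mp h2)]

lemma affT_fix_s16 (n a b x : ℤ) (h1 : ¬ n ∣ x - a) (h2 : ¬ n ∣ x - b) :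
    affT n a b x = x := by
  show (if (x - a) % n = 0 then x - a + b else if (x - b) % n = 0 then x - b + a else x) = x
  rw [if_neg (fun h => h1 (Int.dvd_iff_emod_eq_zero.mpr h)),
    if_neg (fun h => h2 (Int.dvd_iff_emod_eq_zero.mpr h))]

lemma per_nat (n : ℤ) (u : ℤ → ℤ) (h : ∀ i, u (i + n) = u i + n) :
    ∀ (m : ℕ) (x : ℤ), u (x + (m : ℤ) * n) = u x + (m : ℤ) * n := by
  intro m
  induction m with
  | zero => simp
  | succ p ih =>
    intro x
    have e1 : x + ((p : ℤ) + 1) * n = (x + (p : ℤ) * n) + n := by ring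
    push_cast
    rw [e1, h, ih]
    ring

lemma per_int (n : ℤ) (u : ℤ → ℤ) (h : ∀ i, u (i + n) = u i + n)
    (x y : ℤ) (hy : n ∣ y) : u (x + y) = u x + y := by
  obtain ⟨t, rfl⟩ := hy
  rcases le_or_gt 0 t with ht | ht
  · obtain ⟨m, rfl⟩ := Int.eq_ofNat_of_zero_le ht
    have := per_nat n u h m x
    rw [mul_comm] at this
    exact this
  · obtain ⟨m, hm⟩ := Int.eq_ofNat_of_zero_le (le_of_lt (neg_pos.mpr ht))
    have h1 := per_nat n u h m (x + n * t)
    have e1 : x + n * t + (m : ℤ) * n = x := by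
      have : (m : ℤ) = -t := by omega
      rw [this]; ring
    rw [e1] at h1
    have : (m : ℤ) = -t := by omega
    rw [this] at h1
    linarith [h1]

theorem stmt16 (k : ℤ) (hk : 1 ≤ k) (u : ℤ → ℤ)
    (hu : IsAffinePerm (k + 1) u) (hg : IsGrassmannian (k + 1) u)
    (a b c d : ℤ) (hab : a < b) (hbc : b < c) (hcd : c < d)
    (hba : b - a ≤ k) (hdc : d - c ≤ k)
    (hmod : b % (k + 1) = d % (k + 1))
    (hlen : b - a > d - c)
    (hupos : 0 < u (d - b + a))
    (hdef : Def2 (k + 1) u a b c d) :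
    Def2 (k + 1) u c d a (b + c - d) ∧
      (u ∘ affT (k + 1) a b) ∘ affT (k + 1) c d =
        (u ∘ affT (k + 1) c d) ∘ affT (k + 1) a (b + c - d) := by
  obtain ⟨hbij, hper, hsum⟩ := hu
  obtain ⟨⟨ha1, hb1, hP1⟩, ⟨hc2, hd2, hP2⟩⟩ := hdef
  set n : ℤ := k + 1 with hn
  have hper' : ∀ x y : ℤ, n ∣ y → u (x + y) = u x + y := per_int n u hper
  have hnd : ∀ x : ℤ, 0 < x → x < n → ¬ n ∣ x := by
    intro x hx hxn hdvd
    exact absurd (Int.le_of_dvd hx hdvd) (by omega)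
  have hdb : n ∣ d - b := Int.ModEq.dvd hmod
  have hdbpos : 0 < d - b := by omega
  have hab' : ¬ n ∣ b - a := hnd _ (by omega) (by omega)
  have hcd' : ¬ n ∣ d - c := hnd _ (by omega) (by omega)
  -- a ≢ c (mod n), using the second definedness hypothesis
  have hca' : ¬ n ∣ c - a := by
    intro hd
    have hT : affT n a b c = c - a + b := affT_left n a b c hd
    have h1 : u (c - a + b) = u b + (c - a) := by
      have := hper' b (c - a) hd
      rwa [show b + (c - a) = c - a + b by ring] at this
    have h2 : (u ∘ affT n a b) c = u b + (c - a) := by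
      simp only [comp_apply, hT, h1]
    omega
  have hcb' : ¬ n ∣ c - b := by
    intro hd
    exact hcd' (by have := dvd_sub hdb hd; simpa [show d - b - (c - b) = d - c by ring] using this)
  have hda' : ¬ n ∣ d - a := by
    intro hd
    exact hab' (by have := dvd_sub hd hdb; simpa [show d - a - (d - b) = b - a by ring] using this)
  -- value computations
  have hTc : affT n a b c = c :=
    affT_fix_s16 n a b c hca' hcb'
  have huc : u c ≤ 0 := by simpa [comp_apply, hTc] using hc2
  have hTd : affT n a b d = d - b + a := affT_right n a b d hda' hdb
  have hudval : u d = u b + (d - b) := by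
    have := hper' b (d - b) hdb
    rwa [show b + (d - b) = d by ring] at this
  have hud : 0 < u d := by omega
  have hdba : u (d - b + a) = u a + (d - b) := by
    have := hper' a (d - b) hdb
    rwa [show a + (d - b) = d - b + a by ring] at this
  -- DefinedAt u c d
  have G3 : ∀ i : ℤ, c < i → i < d → u i < u c ∨ u d < u i := by
    intro i hci hid
    have hib' : ¬ n ∣ i - b := by
      intro hd
      have h1 : n ∣ d - i := by
        have := dvd_sub hdb hd
        simpa [show d - b - (i - b) = d - i by ring] using this
      have := Int.le_of_dvd (by omega) h1
      omega
    have hji : u i = u (i - (d - b)) + (d - b) := by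
      have := hper' (i - (d - b)) (d - b) hdb
      rwa [show i - (d - b) + (d - b) = i by ring] at this
    have haj : a < i - (d - b) := by omega
    have hjb : i - (d - b) < b := by omega
    rcases hP1 (i - (d - b)) haj hjb with h | h
    · -- u j < u a
      by_cases hia : n ∣ i - a
      · exfalso
        have hja : n ∣ i - (d - b) - a := by
          have := dvd_sub hia hdb
          simpa [show i - a - (d - b) = i - (d - b) - a by ring] using this
        have hja' : n ≤ i - (d - b) - a := Int.le_of_dvd (by omega) hja
        have hval : u (i - (d - b)) = u a + (i - (d - b) - a) := by
          have := hper' a (i - (d - b) - a) hja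
          rwa [show a + (i - (d - b) - a) = i - (d - b) by ring] at this
        omega
      · left
        have hTi : affT n a b i = i := affT_fix_s16 n a b i hia hib'
        have := hP2 i hci hid
        simp only [comp_apply, hTi, hTc, hTd] at this
        rcases this with h2 | h2
        · exact h2
        · exfalso; rw [hdba] at h2; omega
    · right
      omega
  -- the second factor: e = b + c - d
  have hea : ¬ n ∣ b + c - d - a := by
    intro hd
    exact hca' (by
      have := dvd_add hd hdb
      simpa [show b + c - d - a + (d - b) = c - a by ring] using this)
  have hec : n ∣ b + c - d - c := by
    have := dvd_neg.mpr hdb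
    simpa [show -(d - b) = b + c - d - c by ring] using this
  have hT2a : affT n c d a = a := by
    refine affT_fix_s16 n c d a ?_ ?_
    · intro hd
      exact hca' (dvd_sub_comm.mp hd)
    · intro hd
      exact hda' (dvd_sub_comm.mp hd)
  have hT2e : affT n c d (b + c - d) = b := by
    rw [affT_left n c d (b + c - d) hec]; ring
  have G6 : ∀ i : ℤ, a < i → i < b + c - d →
      (u ∘ affT n c d) i < (u ∘ affT n c d) a ∨
        (u ∘ affT n c d) (b + c - d) < (u ∘ affT n c d) i := by
    intro i hai hie
    have hic : ¬ n ∣ i - c := by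
      intro hd
      have h1 : n ∣ b + c - d - i := by
        have := dvd_sub hec hd
        simpa [show b + c - d - c - (i - c) = b + c - d - i by ring] using this
      have := Int.le_of_dvd (by omega) h1
      omega
    have hid' : ¬ n ∣ i - d := by
      intro hd
      have h1 : n ∣ b - i := by
        have := dvd_sub (dvd_neg.mpr hd) hdb
        simpa [show -(i - d) - (d - b) = b - i by ring] using this
      have := Int.le_of_dvd (by omega) h1
      omega
    have hT2i : affT n c d i = i := affT_fix_s16 n c d i hic hid'
    simp only [comp_apply, hT2i, hT2a, hT2e]
    exact hP1 i hai (by omega)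
  refine ⟨⟨⟨huc, hud, G3⟩, ?_, ?_, G6⟩, ?_⟩
  · simpa [comp_apply, hT2a] using ha1
  · simpa [comp_apply, hT2e] using hb1
  -- the equality of maps
  · funext x
    simp only [comp_apply]
    congr 1
    by_cases hxa : n ∣ x - a
    · have hxc : ¬ n ∣ x - c := by
        intro hd
        exact hca' (by
          have := dvd_sub hxa hd
          simpa [show x - a - (x - c) = c - a by ring] using this)
      have hxd : ¬ n ∣ x - d := by
        intro hd
        exact hda' (by
          have := dvd_sub hxa hd
          simpa [show x - a - (x - d) = d - a by ring] using this)
      rw [affT_fix_s16 n c d x hxc hxd, affT_left n a b x hxa,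
        affT_left n a (b + c - d) x hxa,
        affT_left n c d (x - a + (b + c - d))
          (by have := dvd_add hxa hec;
              simpa [show x - a + (b + c - d - c) = x - a + (b + c - d) - c by ring] using this)]
      ring
    · by_cases hxb : n ∣ x - b
      · have hxd : n ∣ x - d := by
          have := dvd_sub hxb hdb
          simpa [show x - b - (d - b) = x - d by ring] using this
        have hxc : ¬ n ∣ x - c := by
          intro hd
          exact hcb' (by
            have := dvd_sub hxb hd
            simpa [show x - b - (x - c) = c - b by ring] using this)
        have hxe : ¬ n ∣ x - (b + c - d) := by
          intro hd
          exact hxc (by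
            have := dvd_add hd hec
            simpa [show x - (b + c - d) + (b + c - d - c) = x - c by ring] using this)
        rw [affT_right n c d x hxc hxd,
          affT_fix_s16 n a b (x - d + c)
            (by intro hd
                exact hca' (by
                  have := dvd_sub hd hxd
                  simpa [show x - d + c - a - (x - d) = c - a by ring] using this))
            (by intro hd
                exact hcb' (by
                  have := dvd_sub hd hxd
                  simpa [show x - d + c - b - (x - d) = c - b by ring] using this)),
          affT_fix_s16 n a (b + c - d) x hxa hxe,
          affT_right n c d x hxc hxd]
      · by_cases hxc : n ∣ x - c
        · have hxd : ¬ n ∣ x - d := by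
            intro hd
            exact hcd' (by
              have := dvd_sub hxc hd
              simpa [show x - c - (x - d) = d - c by ring] using this)
          have hxe : n ∣ x - (b + c - d) := by
            have := dvd_sub hxc hec
            simpa [show x - c - (b + c - d - c) = x - (b + c - d) by ring] using this
          rw [affT_left n c d x hxc,
            affT_right n a b (x - c + d)
              (by intro hd
                  exact hda' (by
                    have := dvd_sub hd hxc
                    simpa [show x - c + d - a - (x - c) = d - a by ring] using this))
              (by have := dvd_add hxc hdb
                  simpa [show x - c + (d - b) = x - c + d - b by ring] using this),
            affT_right n a (b + c - d) x hxa hxe,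
            affT_fix_s16 n c d (x - (b + c - d) + a)
              (by intro hd
                  exact hca' (by
                    have := dvd_sub hxe hd
                    simpa [show x - (b + c - d) - (x - (b + c - d) + a - c) = c - a by ring]
                      using this))
              (by intro hd
                  exact hda' (by
                    have := dvd_sub hxe hd
                    simpa [show x - (b + c - d) - (x - (b + c - d) + a - d) = d - a by ring]
                      using this))]
          ring
        · have hxd : ¬ n ∣ x - d := by
            intro hd
            exact hxb (by
              have := dvd_add hd hdb
              simpa [show x - d + (d - b) = x - b by ring] using this)
          have hxe : ¬ n ∣ x - (b + c - d) := by
            intro hd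
            exact hxc (by
              have := dvd_add hd hec
              simpa [show x - (b + c - d) + (b + c - d - c) = x - c by ring] using this)
          rw [affT_fix_s16 n c d x hxc hxd, affT_fix_s16 n a b x hxa hxb,
            affT_fix_s16 n a (b + c - d) x hxa hxe, affT_fix_s16 n c d x hxc hxd]
end
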